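/- For q ≥ 3, the pair (C(A_q), Diag_q(S_q) ⋊ L) is an elusive pair: the group fixes Γ₁(C(A_q)) setwise (in fact acts transitively on it) but does not fix C(A_q) setwise. -/

import Mathlib

/-- The permutation code `C(T) = {α(g) : g ∈ T}` in `H(q,q)`. -/
def permCode {q : ℕ} (T : Set (Equiv.Perm (Fin q))) : Set (Fin q → Fin q) :=
  {v | ∃ g ∈ T, v = fun i => g i}

/-- The set of neighbours `Γ₁(C)` of a code `C`. -/
def codeNbrs {m q : ℕ} (C : Set (Fin m → Fin q)) : Set (Fin m → Fin q) :=
  {v | v ∉ C ∧ ∃ c ∈ C, hammingDist v c = 1}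

/-- The diagonal action `x_y`: apply the alphabet permutation `y` in every coordinate. -/
def diagAct {m q : ℕ} (y : Equiv.Perm (Fin q)) (v : Fin m → Fin q) : Fin m → Fin q :=
  fun i => y (v i)

/-- The action `σ(z)` permuting coordinate positions by `z`. -/
def posAct {m q : ℕ} (z : Equiv.Perm (Fin m)) (v : Fin m → Fin q) : Fin m → Fin q :=
  fun i => v (z⁻¹ i)

open Equiv

/-- Collapse map: sends `m` to `a`, identity elsewhere. -/
def collapse {q : ℕ} (m a : Fin q) : Fin q → Fin q := fun x => if x = m then a else x

lemma apply_collapse {q : ℕ} (y : Equiv.Perm (Fin q)) (m a x : Fin q) :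
    y (collapse m a x) = collapse (y m) (y a) (y x) := by
  unfold collapse
  by_cases h : x = m <;> simp [h, y.injective.eq_iff]

lemma mem_codeNbrs_iff {q : ℕ} (μ : Fin q → Fin q) :
    μ ∈ codeNbrs (permCode (alternatingGroup (Fin q) : Set (Equiv.Perm (Fin q)))) ↔
      ∃ (g : Equiv.Perm (Fin q)) (m a : Fin q), m ≠ a ∧ μ = collapse m a ∘ ⇑g := by
  constructor
  · rintro ⟨-, c, ⟨g, -, rfl⟩, hd⟩
    unfold hammingDist at hd
    obtain ⟨i₀, hi₀⟩ := Finset.card_eq_one.mp hd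
    have hmem : ∀ i : Fin q, μ i ≠ g i ↔ i = i₀ := by
      intro i
      have := Finset.ext_iff.mp hi₀ i
      simpa using this
    refine ⟨g, g i₀, μ i₀, ((hmem i₀).mpr rfl).symm, funext fun i => ?_⟩
    by_cases h : i = i₀
    · subst h; simp [collapse, Function.comp]
    · have h1 : μ i = g i := by
        by_contra hc; exact h ((hmem i).mp hc)
      have h2 : g i ≠ g i₀ := fun hc => h (g.injective hc)
      simp [collapse, Function.comp, h1, h2]
  · rintro ⟨g, m, a, hma, rfl⟩
    constructor
    · rintro ⟨h, -, hh⟩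
      have e1 : (collapse m a ∘ ⇑g) (g⁻¹ m) = a := by simp [collapse]
      have e2 : (collapse m a ∘ ⇑g) (g⁻¹ a) = a := by simp [collapse, hma.symm]
      have hne : (g⁻¹ m : Fin q) ≠ g⁻¹ a := fun hc => hma (g⁻¹.injective hc)
      apply hne
      apply h.injective
      have := congrFun hh (g⁻¹ m)
      have := congrFun hh (g⁻¹ a)
      simp only [hh] at e1 e2
      calc h (g⁻¹ m) = a := e1
        _ = h (g⁻¹ a) := e2.symm
    · -- find an even permutation at distance 1
      by_cases hg : Equiv.Perm.sign g = 1
      · refine ⟨⇑g, ⟨g, Equiv.Perm.mem_alternatingGroup.mpr hg, rfl⟩, ?_⟩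
        unfold hammingDist
        rw [Finset.card_eq_one]
        refine ⟨g⁻¹ m, Finset.ext fun i => ?_⟩
        simp only [Finset.mem_filter, Finset.mem_univ, true_and, Finset.mem_singleton,
          Finset.mem_filter]
        constructor
        · intro h
          by_contra hc
          have : g i ≠ m := fun he => hc (by rw [← he]; simp)
          exact h (by simp [collapse, Function.comp, this])
        · rintro rfl
          simp [collapse, Function.comp, hma.symm]
      · refine ⟨⇑(Equiv.swap m a * g), ⟨Equiv.swap m a * g,
          Equiv.Perm.mem_alternatingGroup.mpr ?_, rfl⟩, ?_⟩
        · rw [map_mul, Equiv.Perm.sign_swap hma]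
          have : Equiv.Perm.sign g = -1 := by
            rcases Int.units_eq_one_or (Equiv.Perm.sign g) with h | h
            · exact absurd h hg
            · exact h
          rw [this]; decide
        · unfold hammingDist
          rw [Finset.card_eq_one]
          refine ⟨g⁻¹ a, Finset.ext fun i => ?_⟩
          simp only [Finset.mem_filter, Finset.mem_univ, true_and, Finset.mem_singleton]
          constructor
          · intro h
            by_contra hc
            have hia : g i ≠ a := fun he => hc (by rw [← he]; simp)
            apply h
            by_cases him : g i = m
            · simp [collapse, Function.comp, Equiv.Perm.mul_apply, him]
            · simp [collapse, Function.comp, Equiv.Perm.mul_apply, him,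
                Equiv.swap_apply_of_ne_of_ne him hia]
          · rintro rfl
            simp [collapse, Function.comp, Equiv.Perm.mul_apply, hma.symm, hma]

/-- For `q ≥ 3`, `(C(A_q), Diag_q(S_q) ⋊ L)` is an elusive pair: every element of the
group fixes `Γ₁(C(A_q))` setwise, the group acts transitively on `Γ₁(C(A_q))`, but some
element does not fix `C(A_q)` setwise. -/
theorem stmt13 (q : ℕ) (hq : 3 ≤ q) :
    (∀ y z : Equiv.Perm (Fin q),
        (posAct z ∘ diagAct y) ''
            codeNbrs (permCode (alternatingGroup (Fin q) : Set (Equiv.Perm (Fin q))))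
          = codeNbrs (permCode (alternatingGroup (Fin q) : Set (Equiv.Perm (Fin q))))) ∧
    (∀ μ ∈ codeNbrs (permCode (alternatingGroup (Fin q) : Set (Equiv.Perm (Fin q)))),
        ∀ ν ∈ codeNbrs (permCode (alternatingGroup (Fin q) : Set (Equiv.Perm (Fin q)))),
          ∃ y z : Equiv.Perm (Fin q), posAct z (diagAct y μ) = ν) ∧
    ∃ y z : Equiv.Perm (Fin q),
      (posAct z ∘ diagAct y) '' permCode (alternatingGroup (Fin q) : Set (Equiv.Perm (Fin q)))
        ≠ permCode (alternatingGroup (Fin q) : Set (Equiv.Perm (Fin q))) := by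
  refine ⟨?_, ?_, ?_⟩
  · -- part 1: setwise stabilization of Γ₁
    intro y z
    ext v
    simp only [Set.mem_image, Function.comp_apply]
    constructor
    · rintro ⟨μ, hμ, rfl⟩
      rw [mem_codeNbrs_iff] at hμ ⊢
      obtain ⟨g, m, a, hma, rfl⟩ := hμ
      refine ⟨y * g * z⁻¹, y m, y a, fun hc => hma (y.injective hc), funext fun i => ?_⟩
      simp [posAct, diagAct, Function.comp, apply_collapse, Equiv.Perm.mul_apply]
    · intro hv
      refine ⟨posAct z⁻¹ (diagAct y⁻¹ v), ?_, ?_⟩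
      · rw [mem_codeNbrs_iff] at hv ⊢
        obtain ⟨g, m, a, hma, rfl⟩ := hv
        refine ⟨y⁻¹ * g * z, y⁻¹ m, y⁻¹ a, fun hc => hma (y⁻¹.injective hc),
          funext fun i => ?_⟩
        simp [posAct, diagAct, Function.comp, apply_collapse, Equiv.Perm.mul_apply]
      · funext i
        simp [posAct, diagAct]
  · -- part 2: transitivity on Γ₁
    intro μ hμ ν hν
    rw [mem_codeNbrs_iff] at hμ hν
    obtain ⟨g₁, m₁, a₁, hma₁, rfl⟩ := hμ
    obtain ⟨g₂, m₂, a₂, hma₂, rfl⟩ := hν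
    -- build y with y m₁ = m₂ and y a₁ = a₂
    set w : Equiv.Perm (Fin q) := Equiv.swap m₁ m₂ with hw
    have hb : w a₁ ≠ m₂ := by
      intro hc
      apply hma₁
      have : a₁ = w⁻¹ m₂ := by rw [← hc]; simp
      rw [this, hw]
      simp [Equiv.swap_apply_right]
    set y : Equiv.Perm (Fin q) := Equiv.swap (w a₁) a₂ * w with hy
    have hym : y m₁ = m₂ := by
      rw [hy]
      simp only [Equiv.Perm.mul_apply, hw, Equiv.swap_apply_left]
      exact Equiv.swap_apply_of_ne_of_ne (Ne.symm hb) hma₂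
    have hya : y a₁ = a₂ := by
      rw [hy]
      simp [Equiv.Perm.mul_apply, Equiv.swap_apply_left]
    refine ⟨y, g₂⁻¹ * y * g₁, funext fun i => ?_⟩
    have hz : g₁ ((g₂⁻¹ * y * g₁)⁻¹ i) = y⁻¹ (g₂ i) := by
      simp [Equiv.Perm.mul_apply]
    simp only [posAct, diagAct, Function.comp_apply]
    rw [hz, apply_collapse, hym, hya, ← Equiv.Perm.mul_apply, mul_inv_cancel, Equiv.Perm.one_apply]
  · -- part 3: some element moves the code
    have h01 : (⟨0, by omega⟩ : Fin q) ≠ ⟨1, by omega⟩ := by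
      simp [Fin.ext_iff]
    refine ⟨Equiv.swap ⟨0, by omega⟩ ⟨1, by omega⟩, 1, fun hE => ?_⟩
    have hid : (fun i => (1 : Equiv.Perm (Fin q)) i) ∈
        permCode (alternatingGroup (Fin q) : Set (Equiv.Perm (Fin q))) :=
      ⟨1, one_mem _, rfl⟩
    rw [← hE] at hid
    obtain ⟨μ, ⟨g, hg, rfl⟩, hμ⟩ := hid
    have hgy : g = (Equiv.swap (⟨0, by omega⟩ : Fin q) ⟨1, by omega⟩)⁻¹ := by
      ext i
      have h2 : Equiv.swap (⟨0, by omega⟩ : Fin q) ⟨1, by omega⟩ (g i) = i := by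
        simpa [posAct, diagAct] using congrFun hμ i
      conv_rhs => rw [← h2]
      simp
    have hsign : Equiv.Perm.sign g = 1 := Equiv.Perm.mem_alternatingGroup.mp hg
    rw [hgy] at hsign
    rw [map_inv, Equiv.Perm.sign_swap h01] at hsign
    simp at hsign
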